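/- For every graph G that is not complete, sgc(G) ≤ sg(G) − 1. -/

import Mathlib

open SimpleGraph

/-- A choice of one fixed shortest path (geodesic) between each pair of vertices,
symmetric in the sense that the path from `v` to `u` is the reverse of the one
from `u` to `v`. -/
def StrongGeodeticChoice {V : Type*} (G : SimpleGraph V) (p : ∀ u v : V, G.Walk u v) : Prop :=
  ∀ u v : V, (p u v).IsPath ∧ (p u v).length = G.dist u v ∧ p v u = (p u v).reverse

/-- `S` is a strong geodetic set of `G`: one can fix one shortest path between each
pair of vertices of `S` so that every vertex of `G` lies on some fixed path. -/
def IsStrongGeodeticSet {V : Type*} (G : SimpleGraph V) (S : Set V) : Prop :=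
  ∃ p : ∀ u v : V, G.Walk u v, StrongGeodeticChoice G p ∧
    ∀ w : V, ∃ u ∈ S, ∃ v ∈ S, w ∈ (p u v).support

/-- The strong geodetic number of `G`. -/
noncomputable def sg {V : Type*} (G : SimpleGraph V) : ℕ :=
  sInf {n | ∃ S : Set V, S.ncard = n ∧ IsStrongGeodeticSet G S}

/-- The strong geodetic core number of `G`: the minimum, over minimum strong
geodetic sets `S` together with a choice of fixed geodesics witnessing them,
of the size of a subset `X ⊆ S` such that the fixed paths with an endpoint in `X`
already cover all vertices. -/
noncomputable def sgc {V : Type*} (G : SimpleGraph V) : ℕ :=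
  sInf {k | ∃ (S X : Set V) (p : ∀ u v : V, G.Walk u v),
    StrongGeodeticChoice G p ∧ S.ncard = sg G ∧
    (∀ w : V, ∃ u ∈ S, ∃ v ∈ S, w ∈ (p u v).support) ∧
    X ⊆ S ∧ X.ncard = k ∧
    (∀ w : V, ∃ u ∈ X, ∃ v ∈ S, w ∈ (p u v).support)}

/-- `A` is a geodetic set: every vertex lies on some shortest path between two
vertices of `A`. -/
def IsGeodeticSet {V : Type*} (G : SimpleGraph V) (A : Set V) : Prop :=
  ∀ w : V, ∃ u ∈ A, ∃ v ∈ A, ∃ q : G.Walk u v, q.length = G.dist u v ∧ w ∈ q.support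

/-- The geodetic number of `G`. -/
noncomputable def geodeticNumber {V : Type*} (G : SimpleGraph V) : ℕ :=
  sInf {n | ∃ A : Set V, A.ncard = n ∧ IsGeodeticSet G A}

theorem stmt2 {V : Type*} [Fintype V] (G : SimpleGraph V) (hG : G.Connected)
    (hnc : ¬ ∀ u v : V, u ≠ v → G.Adj u v) :
    sgc G ≤ sg G - 1 := by
  classical
  -- A symmetric choice of geodesics for all pairs
  letI : LinearOrder V := LinearOrder.lift' (Fintype.equivFin V) (Equiv.injective _)
  have hq : ∀ u v : V, ∃ q : G.Walk u v, q.IsPath ∧ q.length = G.dist u v := fun u v =>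
    hG.exists_path_of_dist u v
  choose q hq1 hq2 using hq
  set p : ∀ u v : V, G.Walk u v := fun u v => if u ≤ v then q u v else (q v u).reverse with hp
  have hchoice : StrongGeodeticChoice G p := by
    intro u v
    refine ⟨?_, ?_, ?_⟩
    · by_cases h : u ≤ v <;> simp only [hp, h, if_true, if_false, Walk.isPath_reverse_iff] <;>
        exact hq1 _ _
    · by_cases h : u ≤ v <;>
        simp only [hp, h, if_true, if_false, Walk.length_reverse]
      · exact hq2 u v
      · rw [hq2 v u, SimpleGraph.dist_comm]
    · by_cases h : u ≤ v
      · by_cases h' : v ≤ u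
        · have huv : u = v := le_antisymm h h'
          subst huv
          simp only [hp, le_refl, if_true]
          have h0 : (q u u).length = 0 := by rw [hq2]; exact SimpleGraph.dist_self (G:=G) (v:=u)
          rw [Walk.nil_iff_eq_nil.mp (Walk.length_eq_zero_iff.mp h0)]
          rfl
        · simp [hp, h, h']
      · have h' : v ≤ u := le_of_not_ge h
        simp [hp, h, h']
  -- univ is a strong geodetic set, so the defining set of sg is nonempty
  have hsgs : IsStrongGeodeticSet G (Set.univ : Set V) := by
    refine ⟨p, hchoice, fun w => ⟨w, trivial, w, trivial, Walk.start_mem_support _⟩⟩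
  have hne : {n | ∃ S : Set V, S.ncard = n ∧ IsStrongGeodeticSet G S}.Nonempty :=
    ⟨(Set.univ : Set V).ncard, Set.univ, rfl, hsgs⟩
  obtain ⟨S, hScard, p', hchoice', hcover⟩ :
      ∃ S : Set V, S.ncard = sg G ∧ ∃ p' : ∀ u v : V, G.Walk u v,
        StrongGeodeticChoice G p' ∧ ∀ w : V, ∃ u ∈ S, ∃ v ∈ S, w ∈ (p' u v).support := by
    have := Nat.sInf_mem hne
    obtain ⟨S, hS1, p', h2, h3⟩ := this
    exact ⟨S, hS1, p', h2, h3⟩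
  -- the support of any fixed path between a vertex and itself is a singleton
  have hsupp_self : ∀ x : V, (p' x x).support = [x] := by
    intro x
    have h0 : (p' x x).length = 0 := by
      rw [(hchoice' x x).2.1]; exact SimpleGraph.dist_self (G:=G) (v:=x)
    rw [Walk.nil_iff_eq_nil.mp (Walk.length_eq_zero_iff.mp h0)]
    rfl
  -- S has two distinct elements
  push_neg at hnc
  obtain ⟨a, b, hab, hnadj⟩ := hnc
  have hStwo : ∃ x ∈ S, ∃ y ∈ S, x ≠ y := by
    by_contra hcon
    push_neg at hcon
    obtain ⟨u, hu, v, hv, ha⟩ := hcover a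
    obtain ⟨u', hu', v', hv', hb⟩ := hcover b
    have huv : u = v := hcon u hu v hv
    have hu'u : u' = u := hcon u' hu' u hu
    have hv'u : v' = u := hcon v' hv' u hu
    subst huv; subst hu'u; subst hv'u
    rw [hsupp_self] at ha hb
    simp at ha hb
    exact hab (ha.trans hb.symm)
  obtain ⟨x, hxS, y, hyS, hxy⟩ := hStwo
  set X : Set V := S \ {x} with hX
  have hXcard : X.ncard = sg G - 1 := by
    rw [hX, Set.ncard_diff_singleton_of_mem hxS, hScard]
  apply Nat.sInf_le
  refine ⟨S, X, p', hchoice', hScard, hcover, Set.diff_subset, hXcard, ?_⟩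
  intro w
  obtain ⟨u, hu, v, hv, hw⟩ := hcover w
  by_cases hux : u = x
  · by_cases hvx : v = x
    · subst hux; subst hvx
      rw [hsupp_self] at hw
      simp at hw
      subst hw
      exact ⟨y, ⟨hyS, hxy.symm⟩, w, hxS, Walk.end_mem_support _⟩
    · refine ⟨v, ⟨hv, hvx⟩, u, hu, ?_⟩
      rw [(hchoice' u v).2.2, Walk.support_reverse] at *
      exact List.mem_reverse.mpr hw
  · exact ⟨u, ⟨hu, hux⟩, v, hv, hw⟩
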